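/- Let (b₁,b₂) ∈ B with b₃ = (b₁b₂)^(−1), and assume b₁ ≥ 2b₂ + b₃ and D(b₁,b₃,b₂) < 0 (so (b₁,b₂) lies in B_{II}, the existence region of the type-II Riemann ellipsoids). Then (x²−y²)·D(x,y,z) ≠ 0 both for (x,y,z) = (b₁,b₃,b₂) and for (x,y,z) = (b₃,b₁,b₂), and the four numbers G^R₊(b₁,b₃,b₂), G^R₋(b₁,b₃,b₂), G^R₊(b₃,b₁,b₂), G^R₋(b₃,b₁,b₂) are all nonnegative; consequently the quantities N^R₊(x,y,z) = ½(√(G^R₊(x,y,z)) + √(G^R₋(x,y,z))) and N^R₋(x,y,z) = ½(√(G^R₊(x,y,z)) − √(G^R₋(x,y,z))), which define the momenta of the type-II ellipsoids, are well-defined real numbers at both argument triples. -/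
import Mathlib


open Real MeasureTheory

/-- `C₁(x,y,z) = 2πg ∫₀^∞ s·((s+x²)(s+y²)(s+z²))^(−3/2) ds`. -/
noncomputable def riC1 (g x y z : ℝ) : ℝ :=
  2 * π * g * ∫ s in Set.Ioi (0:ℝ),
    s * ((s + x ^ 2) * (s + y ^ 2) * (s + z ^ 2)) ^ (-(3:ℝ)/2)

/-- `C₂(x,y,z) = 2πg ∫₀^∞ s²·((s+x²)(s+y²)(s+z²))^(−3/2) ds`. -/
noncomputable def riC2 (g x y z : ℝ) : ℝ :=
  2 * π * g * ∫ s in Set.Ioi (0:ℝ),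
    s ^ 2 * ((s + x ^ 2) * (s + y ^ 2) * (s + z ^ 2)) ^ (-(3:ℝ)/2)

/-- `G(x,y,z) = x²(y²−z²)C₁ + (y²−4z²)(z²C₁ + C₂)`. -/
noncomputable def Gfun (g x y z : ℝ) : ℝ :=
  x ^ 2 * (y ^ 2 - z ^ 2) * riC1 g x y z
    + (y ^ 2 - 4 * z ^ 2) * (z ^ 2 * riC1 g x y z + riC2 g x y z)

/-- `D(x,y,z) = x²(y²−z²) + z²(4z²−y²)`. -/
def Dfun (x y z : ℝ) : ℝ := x ^ 2 * (y ^ 2 - z ^ 2) + z ^ 2 * (4 * z ^ 2 - y ^ 2)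

/-- `G^R₊(x,y,z)`. -/
noncomputable def GRp (g x y z : ℝ) : ℝ :=
  (y - z) ^ 4 * (x ^ 2 - (y + 2 * z) ^ 2) *
    ((x ^ 2 - z ^ 2) * Gfun g x y z) / ((x ^ 2 - y ^ 2) * Dfun x y z)

/-- `G^R₋(x,y,z)`. -/
noncomputable def GRm (g x y z : ℝ) : ℝ :=
  (y + z) ^ 4 * (x ^ 2 - (y - 2 * z) ^ 2) *
    ((x ^ 2 - z ^ 2) * Gfun g x y z) / ((x ^ 2 - y ^ 2) * Dfun x y z)

/-- `N^R₊(x,y,z) = ½(√G^R₊ + √G^R₋)`. -/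
noncomputable def NRp (g x y z : ℝ) : ℝ :=
  (Real.sqrt (GRp g x y z) + Real.sqrt (GRm g x y z)) / 2

/-- `N^R₋(x,y,z) = ½(√G^R₊ − √G^R₋)`. -/
noncomputable def NRm (g x y z : ℝ) : ℝ :=
  (Real.sqrt (GRp g x y z) - Real.sqrt (GRm g x y z)) / 2

/-- Membership in `B = {(b₁,b₂) : b₁ > b₂ > b₁^(−1/2) > 0}`. -/
def memB (b1 b2 : ℝ) : Prop := b2 < b1 ∧ (Real.sqrt b1)⁻¹ < b2 ∧ 0 < (Real.sqrt b1)⁻¹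

lemma riC1_nonneg (g x y z : ℝ) (hg : 0 ≤ g) : 0 ≤ riC1 g x y z := by
  unfold riC1
  have h : 0 ≤ ∫ s in Set.Ioi (0:ℝ),
      s * ((s + x ^ 2) * (s + y ^ 2) * (s + z ^ 2)) ^ (-(3:ℝ)/2) := by
    apply setIntegral_nonneg measurableSet_Ioi
    intro s hs
    have hs' : 0 < s := hs
    have hb : (0:ℝ) ≤ (s + x ^ 2) * (s + y ^ 2) * (s + z ^ 2) := by positivity
    exact mul_nonneg hs'.le (Real.rpow_nonneg hb _)
  have h2 : (0:ℝ) ≤ 2 * π * g := by positivity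
  exact mul_nonneg h2 h

lemma riC2_nonneg (g x y z : ℝ) (hg : 0 ≤ g) : 0 ≤ riC2 g x y z := by
  unfold riC2
  have h : 0 ≤ ∫ s in Set.Ioi (0:ℝ),
      s ^ 2 * ((s + x ^ 2) * (s + y ^ 2) * (s + z ^ 2)) ^ (-(3:ℝ)/2) := by
    apply setIntegral_nonneg measurableSet_Ioi
    intro s hs
    have hs' : 0 < s := hs
    have hb : (0:ℝ) ≤ (s + x ^ 2) * (s + y ^ 2) * (s + z ^ 2) := by positivity
    exact mul_nonneg (sq_nonneg s) (Real.rpow_nonneg hb _)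
  have h2 : (0:ℝ) ≤ 2 * π * g := by positivity
  exact mul_nonneg h2 h

/-- On the existence region `B_{II}` (`b₁ ≥ 2b₂ + b₃` and
`D(b₁,b₃,b₂) < 0`), the denominators `(x²−y²)D(x,y,z)` are nonzero and `G^R₊`, `G^R₋` are
nonnegative at the triples `(b₁,b₃,b₂)` and `(b₃,b₁,b₂)`, so the momenta `N^R±` of the
type-II ellipsoids are well defined. -/
theorem stmt_11 (g b1 b2 b3 : ℝ) (hg : 0 < g) (hB : memB b1 b2) (hb3 : b3 = (b1 * b2)⁻¹)
    (hII : 2 * b2 + b3 ≤ b1) (hD : Dfun b1 b3 b2 < 0) :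
    (b1 ^ 2 - b3 ^ 2) * Dfun b1 b3 b2 ≠ 0 ∧
    (b3 ^ 2 - b1 ^ 2) * Dfun b3 b1 b2 ≠ 0 ∧
    0 ≤ GRp g b1 b3 b2 ∧ 0 ≤ GRm g b1 b3 b2 ∧
    0 ≤ GRp g b3 b1 b2 ∧ 0 ≤ GRm g b3 b1 b2 ∧
    Real.sqrt (GRp g b1 b3 b2) ^ 2 = GRp g b1 b3 b2 ∧
    Real.sqrt (GRm g b1 b3 b2) ^ 2 = GRm g b1 b3 b2 ∧
    Real.sqrt (GRp g b3 b1 b2) ^ 2 = GRp g b3 b1 b2 ∧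
    Real.sqrt (GRm g b3 b1 b2) ^ 2 = GRm g b3 b1 b2 := by
  obtain ⟨h21, hsb, hsp⟩ := hB
  have hs1 : 0 < Real.sqrt b1 := inv_pos.mp hsp
  have hb1 : 0 < b1 := Real.sqrt_pos.mp hs1
  have hb2 : 0 < b2 := hsp.trans hsb
  have hpos : 0 < b1 * b2 := mul_pos hb1 hb2
  have hb3p : 0 < b3 := by rw [hb3]; exact inv_pos.mpr hpos
  have hs2 : Real.sqrt b1 ^ 2 = b1 := Real.sq_sqrt hb1.le
  have hone : 1 < b2 * Real.sqrt b1 := by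
    have := mul_lt_mul_of_pos_right hsb hs1
    rwa [inv_mul_cancel₀ hs1.ne'] at this
  have hbig : 1 < b1 * b2 ^ 2 := by
    nlinarith [sq_nonneg (b2 * Real.sqrt b1 - 1)]
  have h32 : b3 < b2 := by
    have key : b3 * (b1 * b2) < b2 * (b1 * b2) := by
      rw [hb3, inv_mul_cancel₀ hpos.ne']; nlinarith
    exact lt_of_mul_lt_mul_right key hpos.le
  have h31 : b3 < b1 := h32.trans h21
  have hc1a : 0 ≤ riC1 g b1 b3 b2 := riC1_nonneg g b1 b3 b2 hg.le
  have hc2a : 0 ≤ riC2 g b1 b3 b2 := riC2_nonneg g b1 b3 b2 hg.le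
  have hc1b : 0 ≤ riC1 g b3 b1 b2 := riC1_nonneg g b3 b1 b2 hg.le
  have hc2b : 0 ≤ riC2 g b3 b1 b2 := riC2_nonneg g b3 b1 b2 hg.le
  -- square comparisons
  have hsq32 : b3 ^ 2 ≤ b2 ^ 2 := pow_le_pow_left₀ hb3p.le h32.le 2
  have hsq21 : b2 ^ 2 ≤ b1 ^ 2 := pow_le_pow_left₀ hb2.le h21.le 2
  have h4b : 4 * b2 ^ 2 ≤ b1 ^ 2 := by
    have h := pow_le_pow_left₀ (by positivity : (0:ℝ) ≤ 2 * b2)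
      (by linarith : 2 * b2 ≤ b1) 2
    calc 4 * b2 ^ 2 = (2 * b2) ^ 2 := by ring
      _ ≤ b1 ^ 2 := h
  have hII2 : (b3 + 2 * b2) ^ 2 ≤ b1 ^ 2 :=
    pow_le_pow_left₀ (by positivity) (by linarith) 2
  have hIIm : (b3 - 2 * b2) ^ 2 ≤ b1 ^ 2 :=
    sq_le_sq' (by linarith) (by linarith)
  have hP2 : b3 ^ 2 ≤ (b1 + 2 * b2) ^ 2 := pow_le_pow_left₀ hb3p.le (by linarith) 2
  have hM2 : b3 ^ 2 ≤ (b1 - 2 * b2) ^ 2 := pow_le_pow_left₀ hb3p.le (by linarith) 2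
  -- D symmetry
  have hDsym : Dfun b3 b1 b2 = Dfun b1 b3 b2 := by unfold Dfun; ring
  have hD' : Dfun b3 b1 b2 < 0 := by rw [hDsym]; exact hD
  have hlt : b3 ^ 2 < b1 ^ 2 := pow_lt_pow_left₀ h31 hb3p.le (by norm_num)
  have hd1 : (0:ℝ) < b1 ^ 2 - b3 ^ 2 := by linarith
  have hd2 : b3 ^ 2 - b1 ^ 2 < 0 := by linarith
  -- Gfun signs
  have hGa : Gfun g b1 b3 b2 ≤ 0 := by
    unfold Gfun
    have t1 : b1 ^ 2 * (b3 ^ 2 - b2 ^ 2) * riC1 g b1 b3 b2 ≤ 0 :=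
      mul_nonpos_of_nonpos_of_nonneg
        (mul_nonpos_of_nonneg_of_nonpos (sq_nonneg b1) (by linarith)) hc1a
    have t2 : (b3 ^ 2 - 4 * b2 ^ 2) * (b2 ^ 2 * riC1 g b1 b3 b2 + riC2 g b1 b3 b2) ≤ 0 :=
      mul_nonpos_of_nonpos_of_nonneg (by linarith [sq_nonneg b2])
        (add_nonneg (mul_nonneg (sq_nonneg b2) hc1a) hc2a)
    linarith
  have hGb : 0 ≤ Gfun g b3 b1 b2 := by
    unfold Gfun
    have t1 : 0 ≤ b3 ^ 2 * (b1 ^ 2 - b2 ^ 2) * riC1 g b3 b1 b2 :=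
      mul_nonneg (mul_nonneg (sq_nonneg b3) (by linarith)) hc1b
    have t2 : 0 ≤ (b1 ^ 2 - 4 * b2 ^ 2) * (b2 ^ 2 * riC1 g b3 b1 b2 + riC2 g b3 b1 b2) :=
      mul_nonneg (by linarith)
        (add_nonneg (mul_nonneg (sq_nonneg b2) hc1b) hc2b)
    linarith
  -- the four GR nonnegativities
  have hden1 : (b1 ^ 2 - b3 ^ 2) * Dfun b1 b3 b2 ≤ 0 := (mul_neg_of_pos_of_neg hd1 hD).le
  have hden2 : 0 ≤ (b3 ^ 2 - b1 ^ 2) * Dfun b3 b1 b2 := (mul_pos_of_neg_of_neg hd2 hD').le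
  have hzG1 : (b1 ^ 2 - b2 ^ 2) * Gfun g b1 b3 b2 ≤ 0 :=
    mul_nonpos_of_nonneg_of_nonpos (by linarith) hGa
  have hzG2 : (b3 ^ 2 - b2 ^ 2) * Gfun g b3 b1 b2 ≤ 0 :=
    mul_nonpos_of_nonpos_of_nonneg (by linarith) hGb
  have hGRp1 : 0 ≤ GRp g b1 b3 b2 := by
    unfold GRp
    rw [div_nonneg_iff]
    exact Or.inr ⟨mul_nonpos_of_nonneg_of_nonpos
      (mul_nonneg (by positivity) (by linarith)) hzG1, hden1⟩
  have hGRm1 : 0 ≤ GRm g b1 b3 b2 := by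
    unfold GRm
    rw [div_nonneg_iff]
    exact Or.inr ⟨mul_nonpos_of_nonneg_of_nonpos
      (mul_nonneg (by positivity) (by linarith)) hzG1, hden1⟩
  have hGRp2 : 0 ≤ GRp g b3 b1 b2 := by
    unfold GRp
    exact div_nonneg (mul_nonneg_of_nonpos_of_nonpos
      (mul_nonpos_of_nonneg_of_nonpos (by positivity) (by linarith)) hzG2) hden2
  have hGRm2 : 0 ≤ GRm g b3 b1 b2 := by
    unfold GRm
    exact div_nonneg (mul_nonneg_of_nonpos_of_nonpos
      (mul_nonpos_of_nonneg_of_nonpos (by positivity) (by linarith)) hzG2) hden2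
  exact ⟨(mul_neg_of_pos_of_neg hd1 hD).ne, (mul_pos_of_neg_of_neg hd2 hD').ne',
    hGRp1, hGRm1, hGRp2, hGRm2,
    Real.sq_sqrt hGRp1, Real.sq_sqrt hGRm1, Real.sq_sqrt hGRp2, Real.sq_sqrt hGRm2⟩
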